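/- For every n ≥ 1, Houghton's group H_n is Hopfian: every surjective group endomorphism of H_n is injective (hence an automorphism). -/

import Mathlib

/-! ## Houghton's groups: basic setup -/

/-- The underlying set of Houghton's group: `n` rays of discrete points;
`(i, p)` is the point at position `p` on the ray `R_i`. -/
abbrev XH (n : ℕ) : Type := Fin n × ℕ

/-- `g` acts, outside a finite set, as the translation by `m i` on the ray `R_i`. -/
def HasTranslationVector {n : ℕ} (g : Equiv.Perm (XH n)) (m : Fin n → ℤ) : Prop :=
  ∃ K : Finset (XH n), ∀ x : XH n, x ∉ K →
    (g x).1 = x.1 ∧ ((g x).2 : ℤ) = (x.2 : ℤ) + m x.1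

/-- An eventual translation of `X_n`. -/
def IsEventualTranslation {n : ℕ} (g : Equiv.Perm (XH n)) : Prop :=
  ∃ m : Fin n → ℤ, HasTranslationVector g m

/-- Houghton's group `H_n`: the group of all eventual translations of `X_n`. -/
def Houghton (n : ℕ) : Subgroup (Equiv.Perm (XH n)) where
  carrier := {g | IsEventualTranslation g}
  one_mem' := ⟨0, ∅, fun x _ => by simp⟩
  mul_mem' := by
    rintro a b ⟨ma, Ka, hKa⟩ ⟨mb, Kb, hKb⟩
    classical
    refine ⟨ma + mb, Kb ∪ Kb.image b ∪ Ka.image b.symm, fun x hx => ?_⟩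
    simp only [Finset.mem_union, not_or] at hx
    have hxb : x ∉ Kb := hx.1.1
    have hbx : b x ∉ Ka := by
      intro hc
      exact hx.2 (Finset.mem_image.mpr ⟨b x, hc, b.symm_apply_apply x⟩)
    obtain ⟨hb1, hb2⟩ := hKb x hxb
    obtain ⟨ha1, ha2⟩ := hKa (b x) hbx
    refine ⟨?_, ?_⟩
    · show (a (b x)).1 = x.1
      rw [ha1, hb1]
    · show ((a (b x)).2 : ℤ) = (x.2 : ℤ) + (ma + mb) x.1
      rw [ha2, hb1, hb2, Pi.add_apply]
      ring
  inv_mem' := by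
    rintro a ⟨m, K, hK⟩
    classical
    refine ⟨-m, K.image a, fun x hx => ?_⟩
    have hy : a⁻¹ x ∉ K := by
      intro hc
      exact hx (Finset.mem_image.mpr ⟨a⁻¹ x, hc, a.apply_symm_apply x⟩)
    obtain ⟨e1, e2⟩ := hK _ hy
    rw [show a (a⁻¹ x) = x from a.apply_symm_apply x] at e1 e2
    refine ⟨e1.symm, ?_⟩
    rw [← e1] at e2
    rw [Pi.neg_apply]
    omega

/-- The subgroup of finitely supported permutations of `X_n`. -/
def FSymSub (n : ℕ) : Subgroup (Equiv.Perm (XH n)) where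
  carrier := {g | {x | g x ≠ x}.Finite}
  one_mem' := by simp
  mul_mem' := by
    intro a b ha hb
    apply Set.Finite.subset (ha.union hb)
    intro x hx
    by_cases h : b x = x
    · left
      show a x ≠ x
      simpa [Equiv.Perm.mul_apply, h] using hx
    · right; exact h
  inv_mem' := by
    intro a ha
    apply Set.Finite.subset ha
    intro x hx
    show a x ≠ x
    intro hc
    apply hx
    show a⁻¹ x = x
    conv_lhs => rw [← hc]
    exact a.symm_apply_apply x

/-- The subgroup of finitely supported even permutations of `X_n`:
products of an even number of transpositions. -/
def FAltSub (n : ℕ) : Subgroup (Equiv.Perm (XH n)) where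
  carrier := {g | ∃ l : List (Equiv.Perm (XH n)),
    (∀ τ ∈ l, τ.IsSwap) ∧ Even l.length ∧ l.prod = g}
  one_mem' := ⟨[], by simp, by simp, by simp⟩
  mul_mem' := by
    rintro a b ⟨la, hla, hea, rfl⟩ ⟨lb, hlb, heb, rfl⟩
    refine ⟨la ++ lb, ?_, ?_, List.prod_append⟩
    · intro τ hτ
      rcases List.mem_append.mp hτ with h | h
      exacts [hla τ h, hlb τ h]
    · simpa using hea.add heb
  inv_mem' := by
    rintro a ⟨l, hl, he, rfl⟩
    refine ⟨(l.map fun x => x⁻¹).reverse, ?_, by simpa using he,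
      (List.prod_inv_reverse l).symm⟩
    intro τ hτ
    rw [List.mem_reverse, List.mem_map] at hτ
    obtain ⟨σ, hσ, rfl⟩ := hτ
    obtain ⟨x, y, hxy, rfl⟩ := hl σ hσ
    exact ⟨x, y, hxy, by rw [Equiv.swap_inv]⟩

/-- `FSym_n` and `FAlt_n` viewed as subgroups of `H_n`. -/
def FSymIn (n : ℕ) : Subgroup (Houghton n) := (FSymSub n).comap (Houghton n).subtype

def FAltIn (n : ℕ) : Subgroup (Houghton n) := (FAltSub n).comap (Houghton n).subtype

/-- The index of the first ray `R_1`. -/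
def ray0 (n : ℕ) (hn : 0 < n) : Fin n := ⟨0, hn⟩

/-- The underlying function of the generator `g_i`. -/
def gFun (n : ℕ) (hn : 0 < n) (i : Fin n) : XH n → XH n := fun x =>
  if x.1 = ray0 n hn then (if x.2 = 0 then (i, 0) else (ray0 n hn, x.2 - 1))
  else if x.1 = i then (i, x.2 + 1) else x

/-- The inverse of `gFun`. -/
def gInvFun (n : ℕ) (hn : 0 < n) (i : Fin n) : XH n → XH n := fun x =>
  if x.1 = i then (if x.2 = 0 then (ray0 n hn, 0) else (i, x.2 - 1))
  else if x.1 = ray0 n hn then (ray0 n hn, x.2 + 1) else x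

/-- The generator `g_i` of `H_n` (as a permutation): it translates the first ray
down by one, sends `(1,1)` to `(i,1)` and translates the ray `R_i` up by one. -/
def gGen (n : ℕ) (hn : 0 < n) (i : Fin n) (hi : i ≠ ray0 n hn) : Equiv.Perm (XH n) where
  toFun := gFun n hn i
  invFun := gInvFun n hn i
  left_inv := by
    rintro ⟨j, p⟩
    show gInvFun n hn i (gFun n hn i (j, p)) = (j, p)
    simp only [gFun, gInvFun]
    split_ifs <;> simp_all [Prod.ext_iff] <;> omega
  right_inv := by
    rintro ⟨j, p⟩
    show gFun n hn i (gInvFun n hn i (j, p)) = (j, p)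
    simp only [gFun, gInvFun]
    split_ifs <;> simp_all [Prod.ext_iff] <;> omega

/-- The translation vector of `g_i`. -/
def gVec (n : ℕ) (hn : 0 < n) (i : Fin n) : Fin n → ℤ :=
  fun j => if j = ray0 n hn then -1 else if j = i then 1 else 0

theorem gGen_mem (n : ℕ) (hn : 0 < n) (i : Fin n) (hi : i ≠ ray0 n hn) :
    gGen n hn i hi ∈ Houghton n := by
  refine ⟨gVec n hn i, {(ray0 n hn, 0)}, ?_⟩
  rintro ⟨j, p⟩ hx
  rw [Finset.mem_singleton] at hx
  have hx' : j ≠ ray0 n hn ∨ p ≠ 0 := by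
    by_contra h
    push_neg at h
    exact hx (by rw [h.1, h.2])
  show (gFun n hn i (j, p)).1 = j ∧ ((gFun n hn i (j, p)).2 : ℤ) = (p : ℤ) + gVec n hn i j
  simp only [gFun, gVec]
  split_ifs <;> simp_all [Prod.ext_iff] <;> omega

/-- The generator `g_i` as an element of `H_n`. -/
def hGen (n : ℕ) (hn : 0 < n) (i : Fin n) (hi : i ≠ ray0 n hn) : Houghton n :=
  ⟨gGen n hn i hi, gGen_mem n hn i hi⟩

/-- The transposition `α` exchanging `(1,1)` and `(1,2)`. -/
def alphaPerm (n : ℕ) (hn : 0 < n) : Equiv.Perm (XH n) :=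
  Equiv.swap (ray0 n hn, 0) (ray0 n hn, 1)

theorem alphaPerm_mem (n : ℕ) (hn : 0 < n) : alphaPerm n hn ∈ Houghton n := by
  refine ⟨0, {(ray0 n hn, 0), (ray0 n hn, 1)}, ?_⟩
  intro x hx
  simp only [Finset.mem_insert, Finset.mem_singleton, not_or] at hx
  rw [show alphaPerm n hn x = x from Equiv.swap_apply_of_ne_of_ne hx.1 hx.2]
  simp

/-- `α` as an element of `H_n`. -/
def hAlpha (n : ℕ) (hn : 0 < n) : Houghton n := ⟨alphaPerm n hn, alphaPerm_mem n hn⟩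

theorem alphaPerm_mem_FSym (n : ℕ) (hn : 0 < n) : alphaPerm n hn ∈ FSymSub n := by
  show {x | alphaPerm n hn x ≠ x}.Finite
  apply Set.Finite.subset ((Set.finite_singleton (ray0 n hn, 1)).insert (ray0 n hn, 0))
  intro x hx
  by_contra hc
  simp only [Set.mem_insert_iff, Set.mem_singleton_iff, not_or] at hc
  exact hx (Equiv.swap_apply_of_ne_of_ne hc.1 hc.2)

theorem swap_mem_houghton {n : ℕ} (P Q : XH n) : Equiv.swap P Q ∈ Houghton n := by
  classical
  refine ⟨0, {P, Q}, ?_⟩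
  intro x hx
  simp only [Finset.mem_insert, Finset.mem_singleton, not_or] at hx
  rw [Equiv.swap_apply_of_ne_of_ne hx.1 hx.2]
  simp

/-- The transposition exchanging two points, as an element of `H_n`. -/
def hSwap {n : ℕ} (P Q : XH n) : Houghton n := ⟨Equiv.swap P Q, swap_mem_houghton P Q⟩

/-- The set of generators `{g_2, …, g_n}` of `H_n`. -/
def houghtonGensOnly (n : ℕ) (hn : 0 < n) : Set (Houghton n) :=
  {x | ∃ (i : Fin n) (hi : i ≠ ray0 n hn), x = hGen n hn i hi}

/-- The chosen generating set of `H_n`: `{g_2, …, g_n}` for `n ≠ 2`,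
and `{g_2, α}` for `n = 2`. -/
def houghtonGenSet (n : ℕ) (hn : 0 < n) : Set (Houghton n) :=
  if n = 2 then houghtonGensOnly n hn ∪ {hAlpha n hn} else houghtonGensOnly n hn

/-- Word length with respect to a set of generators (and their inverses). -/
noncomputable def wordLength {G : Type*} [Group G] (S : Set G) (g : G) : ℕ :=
  sInf {k | ∃ l : List G, (∀ x ∈ l, x ∈ S ∨ x⁻¹ ∈ S) ∧ l.length = k ∧ l.prod = g}

/-- The growth rate of an endomorphism `φ`:
`GR(φ) = sup_g limsup_k |φ^k(g)|^{1/k}`. -/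
noncomputable def growthRate {G : Type*} [Group G] (S : Set G) (φ : G →* G) : ℝ :=
  ⨆ g : G, Filter.limsup
    (fun k : ℕ => (wordLength S ((⇑φ)^[k] g) : ℝ) ^ (1 / (k : ℝ))) Filter.atTop

/-- The orbit of `x` under the permutation `h`. -/
def permOrbit {α : Type*} (h : Equiv.Perm α) (x : α) : Set α :=
  Set.range (fun k : ℤ => (h ^ k) x)

/-- `x` has infinite orbit under `h` (`x` is an essential point of `h`). -/
def InfiniteOrbit {α : Type*} (h : Equiv.Perm α) (x : α) : Prop :=
  (permOrbit h x).Infinite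

/-- The image `φ(g_i)` as a permutation of `X_n`. -/
def imageGen {n : ℕ} (h0 : 0 < n) (φ : Houghton n →* Houghton n)
    (i : Fin n) (hi : i ≠ ray0 n h0) : Equiv.Perm (XH n) :=
  ↑(φ (hGen n h0 i hi))

/-- The image `φ(α)` as a permutation of `X_n`. -/
def imageAlpha {n : ℕ} (h0 : 0 < n) (φ : Houghton n →* Houghton n) : Equiv.Perm (XH n) :=
  ↑(φ (hAlpha n h0))

/-- A transposition-orbit of an involution: a pair `{x, h x}` with `h x ≠ x`. -/
def TOrbit {Ω : Type*} (h : Equiv.Perm Ω) (T : Set Ω) : Prop :=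
  ∃ x, h x ≠ x ∧ T = {x, h x}

/-- The zero-sum vectors in `ℤ^n`. -/
def zeroSum (n : ℕ) : AddSubgroup (Fin n → ℤ) where
  carrier := {m | ∑ j, m j = 0}
  zero_mem' := by simp
  add_mem' := by
    intro a b ha hb
    simp only [Set.mem_setOf_eq] at *
    simp [Finset.sum_add_distrib, ha, hb]
  neg_mem' := by
    intro a ha
    simp only [Set.mem_setOf_eq] at *
    simp [ha]


/-! ### Auxiliary lemmas for the Hopfian property -/

section HopfAux

open Equiv Equiv.Perm

theorem my_htv_mul {n : ℕ} {a b : Equiv.Perm (XH n)} {ma mb : Fin n → ℤ}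
    (ha : HasTranslationVector a ma) (hb : HasTranslationVector b mb) :
    HasTranslationVector (a * b) (ma + mb) := by
  classical
  obtain ⟨Ka, hKa⟩ := ha
  obtain ⟨Kb, hKb⟩ := hb
  refine ⟨Kb ∪ Kb.image b ∪ Ka.image b.symm, fun x hx => ?_⟩
  simp only [Finset.mem_union, not_or] at hx
  have hxb : x ∉ Kb := hx.1.1
  have hbx : b x ∉ Ka := by
    intro hc
    exact hx.2 (Finset.mem_image.mpr ⟨b x, hc, b.symm_apply_apply x⟩)
  obtain ⟨hb1, hb2⟩ := hKb x hxb
  obtain ⟨ha1, ha2⟩ := hKa (b x) hbx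
  refine ⟨?_, ?_⟩
  · show (a (b x)).1 = x.1
    rw [ha1, hb1]
  · show ((a (b x)).2 : ℤ) = (x.2 : ℤ) + (ma + mb) x.1
    rw [ha2, hb1, hb2, Pi.add_apply]
    ring

theorem my_htv_inv {n : ℕ} {a : Equiv.Perm (XH n)} {m : Fin n → ℤ}
    (ha : HasTranslationVector a m) : HasTranslationVector a⁻¹ (-m) := by
  classical
  obtain ⟨K, hK⟩ := ha
  refine ⟨K.image a, fun x hx => ?_⟩
  have hy : a⁻¹ x ∉ K := by
    intro hc
    exact hx (Finset.mem_image.mpr ⟨a⁻¹ x, hc, a.apply_symm_apply x⟩)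
  obtain ⟨e1, e2⟩ := hK _ hy
  rw [show a (a⁻¹ x) = x from a.apply_symm_apply x] at e1 e2
  refine ⟨e1.symm, ?_⟩
  rw [← e1] at e2
  rw [Pi.neg_apply]
  omega

theorem my_mem_fsym_of_htv_zero {n : ℕ} {g : Equiv.Perm (XH n)}
    (h : HasTranslationVector g 0) : g ∈ FSymSub n := by
  obtain ⟨K, hK⟩ := h
  show {x | g x ≠ x}.Finite
  refine K.finite_toSet.subset fun x hx => ?_
  by_contra hxK
  obtain ⟨h1, h2⟩ := hK x hxK
  refine hx ?_
  refine Prod.ext h1 ?_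
  simp only [Pi.zero_apply, add_zero] at h2
  exact_mod_cast h2

theorem my_comm_fsym {n : ℕ} {a b : Equiv.Perm (XH n)}
    (ha : a ∈ Houghton n) (hb : b ∈ Houghton n) :
    a * b * a⁻¹ * b⁻¹ ∈ FSymSub n := by
  obtain ⟨ma, hma⟩ := ha
  obtain ⟨mb, hmb⟩ := hb
  have h := my_htv_mul (my_htv_mul (my_htv_mul hma hmb) (my_htv_inv hma)) (my_htv_inv hmb)
  have hz : ma + mb + -ma + -mb = 0 := by abel
  rw [hz] at h
  exact my_mem_fsym_of_htv_zero h

theorem my_fsym_le_houghton {n : ℕ} {g : Equiv.Perm (XH n)}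
    (hg : g ∈ FSymSub n) : g ∈ Houghton n := by
  have hfin : {x | g x ≠ x}.Finite := hg
  refine ⟨0, hfin.toFinset, fun x hx => ?_⟩
  have hgx : g x = x := by
    by_contra h
    exact hx (hfin.mem_toFinset.mpr h)
  rw [hgx]
  simp

theorem my_exists_swap_list {α : Type*} [DecidableEq α] :
    ∀ (k : ℕ) (g : Equiv.Perm α) (hg : {x | g x ≠ x}.Finite), hg.toFinset.card ≤ k →
      ∃ l : List (Equiv.Perm α), (∀ τ ∈ l, τ.IsSwap) ∧ l.prod = g := by
  intro k
  induction k with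
  | zero =>
    intro g hg hcard
    have hall : ∀ x, g x = x := by
      intro x
      by_contra hx
      have hmem : x ∈ hg.toFinset := hg.mem_toFinset.mpr hx
      rw [Finset.card_eq_zero.mp (Nat.le_zero.mp hcard)] at hmem
      exact absurd hmem (Finset.notMem_empty x)
    have hg1 : g = 1 := Equiv.ext (by simpa using hall)
    exact ⟨[], by simp, by simp [hg1]⟩
  | succ k ih =>
    intro g hg hcard
    by_cases h1 : g = 1
    · exact ⟨[], by simp, by simp [h1]⟩
    · have hex : ∃ x, g x ≠ x := by
        by_contra h
        push_neg at h
        exact h1 (Equiv.ext (by simpa using h))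
      obtain ⟨x, hx⟩ := hex
      have hsub : {y | (Equiv.swap x (g x) * g) y ≠ y} ⊆ {y | g y ≠ y} \ {x} := by
        intro y hy
        have hyx : y ≠ x := by
          intro h
          subst h
          refine hy ?_
          show Equiv.swap y (g y) (g y) = y
          exact Equiv.swap_apply_right _ _
        have hgy : g y ≠ y := by
          intro hgyy
          refine hy ?_
          show Equiv.swap x (g x) (g y) = y
          rw [hgyy]
          have hygx : y ≠ g x := by
            intro h
            exact hx (g.injective (by rw [← h, hgyy]))
          exact Equiv.swap_apply_of_ne_of_ne hyx hygx
        exact ⟨hgy, by simpa using hyx⟩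
      have hfin' : {y | (Equiv.swap x (g x) * g) y ≠ y}.Finite :=
        (hg.diff (t := {x})).subset hsub
      have hcard' : hfin'.toFinset.card ≤ k := by
        have hss : hfin'.toFinset ⊆ hg.toFinset.erase x := by
          intro y hy
          rw [Set.Finite.mem_toFinset] at hy
          obtain ⟨h2, h3⟩ := hsub hy
          rw [Finset.mem_erase, Set.Finite.mem_toFinset]
          exact ⟨by simpa using h3, h2⟩
        have h2 := Finset.card_le_card hss
        have h3 : x ∈ hg.toFinset := hg.mem_toFinset.mpr hx
        have h4 := Finset.card_erase_of_mem h3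
        have h5 : 0 < hg.toFinset.card := Finset.card_pos.mpr ⟨x, h3⟩
        omega
      obtain ⟨l, hl, hlprod⟩ := ih (Equiv.swap x (g x) * g) hfin' hcard'
      refine ⟨Equiv.swap x (g x) :: l, ?_, ?_⟩
      · intro τ hτ
        rcases List.mem_cons.mp hτ with rfl | h
        · exact ⟨x, g x, Ne.symm hx, rfl⟩
        · exact hl τ h
      · rw [List.prod_cons, hlprod, ← mul_assoc, Equiv.swap_mul_self, one_mul]

theorem my_comm_falt {n : ℕ} {u v : Equiv.Perm (XH n)}
    (hu : u ∈ FSymSub n) (hv : v ∈ FSymSub n) :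
    u * v * u⁻¹ * v⁻¹ ∈ FAltSub n := by
  classical
  obtain ⟨lu, hlu, hpu⟩ := my_exists_swap_list _ u hu le_rfl
  obtain ⟨lv, hlv, hpv⟩ := my_exists_swap_list _ v hv le_rfl
  refine ⟨lu ++ lv ++ (lu.map fun x => x⁻¹).reverse ++ (lv.map fun x => x⁻¹).reverse,
    ?_, ?_, ?_⟩
  · intro τ hτ
    simp only [List.mem_append, List.mem_reverse, List.mem_map] at hτ
    rcases hτ with ((h | h) | ⟨σ, hσ, rfl⟩) | ⟨σ, hσ, rfl⟩
    · exact hlu τ h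
    · exact hlv τ h
    · obtain ⟨p, q, hpq, rfl⟩ := hlu σ hσ
      exact ⟨p, q, hpq, by rw [Equiv.swap_inv]⟩
    · obtain ⟨p, q, hpq, rfl⟩ := hlv σ hσ
      exact ⟨p, q, hpq, by rw [Equiv.swap_inv]⟩
  · simp only [List.length_append, List.length_reverse, List.length_map]
    exact ⟨lu.length + lv.length, by ring⟩
  · rw [List.prod_append, List.prod_append, List.prod_append,
      ← List.prod_inv_reverse, ← List.prod_inv_reverse, hpu, hpv]

end HopfAux

section HopfAux2

theorem my_extendDomain_swap {α β : Type*} [DecidableEq α] [DecidableEq β]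
    {p : β → Prop} [DecidablePred p] (f : α ≃ Subtype p) (a b : α) :
    (Equiv.swap a b).extendDomain f = Equiv.swap (f a : β) (f b : β) := by
  ext x
  by_cases hx : p x
  · rw [Equiv.Perm.extendDomain_apply_subtype _ f hx]
    rcases eq_or_ne x (f a : β) with h | hxa
    · have h1 : (⟨x, hx⟩ : Subtype p) = f a := Subtype.ext h
      rw [h1, Equiv.symm_apply_apply, Equiv.swap_apply_left, h, Equiv.swap_apply_left]
    · rcases eq_or_ne x (f b : β) with h | hxb
      · have h1 : (⟨x, hx⟩ : Subtype p) = f b := Subtype.ext h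
        rw [h1, Equiv.symm_apply_apply, Equiv.swap_apply_right, h, Equiv.swap_apply_right]
      · have ha' : f.symm ⟨x, hx⟩ ≠ a := by
          intro h
          have := congrArg f h
          rw [Equiv.apply_symm_apply] at this
          exact hxa (congrArg Subtype.val this)
        have hb' : f.symm ⟨x, hx⟩ ≠ b := by
          intro h
          have := congrArg f h
          rw [Equiv.apply_symm_apply] at this
          exact hxb (congrArg Subtype.val this)
        rw [Equiv.swap_apply_of_ne_of_ne ha' hb', Equiv.apply_symm_apply,
          Equiv.swap_apply_of_ne_of_ne hxa hxb]
  · rw [Equiv.Perm.extendDomain_apply_not_subtype _ f hx]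
    have h1 : x ≠ (f a : β) := fun h => hx (h ▸ (f a).2)
    have h2 : x ≠ (f b : β) := fun h => hx (h ▸ (f b).2)
    exact (Equiv.swap_apply_of_ne_of_ne h1 h2).symm

theorem my_extendDomain_mem_houghton {n : ℕ} {α : Type*} (e : Equiv.Perm α)
    {F : Finset (XH n)} (f : α ≃ {x // x ∈ F}) :
    e.extendDomain f ∈ Houghton n := by
  refine my_fsym_le_houghton ?_
  show {x | e.extendDomain f x ≠ x}.Finite
  refine F.finite_toSet.subset fun x hx => ?_
  by_contra hxF
  exact hx (Equiv.Perm.extendDomain_apply_not_subtype e f hxF)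

end HopfAux2

open scoped commutatorElement

/-- For every `n ≥ 1`, Houghton's group `H_n` is Hopfian: every
surjective endomorphism is injective. -/
theorem houghton_hopfian (n : ℕ) (hn : 1 ≤ n)
    (φ : Houghton n →* Houghton n) (hs : Function.Surjective φ) :
    Function.Injective φ := by
  classical
  have hn0 : 0 < n := hn
  haveI : Nonempty (Fin n) := ⟨⟨0, hn0⟩⟩
  haveI : Infinite (XH n) := Prod.infinite_of_right
  rw [← MonoidHom.ker_eq_bot_iff]
  by_contra hker
  obtain ⟨g₀, hg₀ker, hg₀ne⟩ : ∃ g ∈ φ.ker, g ≠ 1 := by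
    by_contra h2
    push_neg at h2
    exact hker ((Subgroup.eq_bot_iff_forall _).mpr h2)
  -- the kernel, viewed as a set of permutations
  set N' : Subgroup (Equiv.Perm (XH n)) := φ.ker.map (Houghton n).subtype with hN'def
  have hconj : ∀ w ∈ Houghton n, ∀ v ∈ N', w * v * w⁻¹ ∈ N' := by
    intro w hw v hv
    rcases Subgroup.mem_map.mp hv with ⟨v', hv', rfl⟩
    refine Subgroup.mem_map.mpr ⟨⟨w, hw⟩ * v' * ⟨w, hw⟩⁻¹, ?_, rfl⟩
    exact (MonoidHom.normal_ker φ).conj_mem v' hv' ⟨w, hw⟩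
  -- Step A : a nontrivial even finitely-supported element of N'
  set g : Equiv.Perm (XH n) := (g₀ : Equiv.Perm (XH n)) with hgdef
  have hgN : g ∈ N' := Subgroup.mem_map.mpr ⟨g₀, hg₀ker, rfl⟩
  obtain ⟨x, hx⟩ : ∃ x, g x ≠ x := by
    by_contra h
    push_neg at h
    exact hg₀ne (Subtype.ext (Equiv.ext h))
  obtain ⟨z, hz⟩ := Infinite.exists_notMem_finset ({x, g x} : Finset (XH n))
  simp only [Finset.mem_insert, Finset.mem_singleton, not_or] at hz
  obtain ⟨hzx, hzgx⟩ := hz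
  have hcN : Equiv.swap (g x) (g z) * Equiv.swap x z ∈ N' := by
    have h1 : Equiv.swap x z * g⁻¹ * (Equiv.swap x z)⁻¹ ∈ N' := by
      have := hconj _ (swap_mem_houghton x z) g⁻¹ (inv_mem hgN)
      simpa [mul_assoc] using this
    have h2 := mul_mem hgN h1
    have h3 : g * (Equiv.swap x z * g⁻¹ * (Equiv.swap x z)⁻¹) =
        Equiv.swap (g x) (g z) * Equiv.swap x z := by
      rw [Equiv.swap_apply_apply, Equiv.swap_inv]
      group
    rwa [h3] at h2
  have hcx : (Equiv.swap (g x) (g z) * Equiv.swap x z) x ≠ x := by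
    have h1 : (Equiv.swap (g x) (g z) * Equiv.swap x z) x =
        Equiv.swap (g x) (g z) z := by
      rw [Equiv.Perm.mul_apply, Equiv.swap_apply_left]
    rw [h1]
    rcases eq_or_ne z (g z) with h | h
    · rw [← h, Equiv.swap_apply_right]
      exact hx
    · rw [Equiv.swap_apply_of_ne_of_ne hzgx h]
      exact hzx
  -- Step B : a 5-point superset F of the support of c, and the A₅ embedding
  have hcard4 : ({x, z, g x, g z} : Finset (XH n)).card ≤ 5 := by
    have h1 := Finset.card_insert_le x ({z, g x, g z} : Finset (XH n))
    have h2 := Finset.card_insert_le z ({g x, g z} : Finset (XH n))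
    have h3 := Finset.card_insert_le (g x) ({g z} : Finset (XH n))
    have h4 : ({g z} : Finset (XH n)).card = 1 := Finset.card_singleton _
    omega
  obtain ⟨F, hFsub, hFcard⟩ := Infinite.exists_superset_card_eq _ 5 hcard4
  have hxF : x ∈ F := hFsub (by simp)
  have hzF : z ∈ F := hFsub (by simp)
  have hgxF : g x ∈ F := hFsub (by simp)
  have hgzF : g z ∈ F := hFsub (by simp)
  have hcardF : Fintype.card ({u // u ∈ F}) = 5 := by
    rw [Fintype.card_coe]
    exact hFcard
  set f : Fin 5 ≃ {u // u ∈ F} := (Fintype.equivFinOfCardEq hcardF).symm with hfdef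
  set ι : Equiv.Perm (Fin 5) →* Equiv.Perm (XH n) := Equiv.Perm.extendDomainHom f with hιdef
  have hι_apply : ∀ e : Equiv.Perm (Fin 5), ι e = e.extendDomain f := fun _ => rfl
  have hι_swap : ∀ a b : Fin 5,
      ι (Equiv.swap a b) = Equiv.swap ((f a : XH n)) ((f b : XH n)) := by
    intro a b
    rw [hι_apply, my_extendDomain_swap]
  have hιH : ∀ e : Equiv.Perm (Fin 5), ι e ∈ Houghton n := fun e =>
    my_extendDomain_mem_houghton e f
  -- simplicity of A₅ pushes c through the kernel
  have hιN : ∀ e : Equiv.Perm (Fin 5), Equiv.Perm.sign e = 1 → ι e ∈ N' := by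
    intro e he
    set K : Subgroup (Equiv.Perm (Fin 5)) := N'.comap ι with hKdef
    have hKnorm : K.Normal := by
      constructor
      intro k hk u
      show ι (u * k * u⁻¹) ∈ N'
      rw [map_mul, map_mul, map_inv]
      exact hconj (ι u) (hιH u) _ hk
    have hne_xz : x ≠ z := Ne.symm hzx
    have hne_g : g x ≠ g z := fun h => hne_xz (g.injective h)
    set x' : Fin 5 := f.symm ⟨x, hxF⟩ with hx'def
    set z' : Fin 5 := f.symm ⟨z, hzF⟩ with hz'def
    set gx' : Fin 5 := f.symm ⟨g x, hgxF⟩ with hgx'def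
    set gz' : Fin 5 := f.symm ⟨g z, hgzF⟩ with hgz'def
    have hfx : (f x' : XH n) = x := by rw [hx'def, Equiv.apply_symm_apply]
    have hfz : (f z' : XH n) = z := by rw [hz'def, Equiv.apply_symm_apply]
    have hfgx : (f gx' : XH n) = g x := by rw [hgx'def, Equiv.apply_symm_apply]
    have hfgz : (f gz' : XH n) = g z := by rw [hgz'def, Equiv.apply_symm_apply]
    set chat : Equiv.Perm (Fin 5) := Equiv.swap gx' gz' * Equiv.swap x' z' with hchatdef
    have hιchat : ι chat = Equiv.swap (g x) (g z) * Equiv.swap x z := by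
      rw [hchatdef, map_mul, hι_swap, hι_swap, hfx, hfz, hfgx, hfgz]
    have hne1 : gx' ≠ gz' := fun h => hne_g (by
      have := congrArg f h
      rw [hgx'def, hgz'def, Equiv.apply_symm_apply, Equiv.apply_symm_apply] at this
      exact congrArg Subtype.val this)
    have hne2 : x' ≠ z' := fun h => hne_xz (by
      have := congrArg f h
      rw [hx'def, hz'def, Equiv.apply_symm_apply, Equiv.apply_symm_apply] at this
      exact congrArg Subtype.val this)
    have hchatA : chat ∈ alternatingGroup (Fin 5) := by
      rw [Equiv.Perm.mem_alternatingGroup, hchatdef, map_mul,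
        Equiv.Perm.sign_swap hne1, Equiv.Perm.sign_swap hne2]
      norm_num
    have hchatK : chat ∈ K := by
      show ι chat ∈ N'
      rw [hιchat]
      exact hcN
    have hchat1 : chat ≠ 1 := by
      intro h
      apply hcx
      rw [← hιchat, h, map_one]
      rfl
    have hnorm2 : (K.subgroupOf (alternatingGroup (Fin 5))).Normal :=
      hKnorm.subgroupOf _
    rcases IsSimpleGroup.eq_bot_or_eq_top_of_normal _ hnorm2 with hbot | htop
    · exfalso
      have hmem : (⟨chat, hchatA⟩ : alternatingGroup (Fin 5)) ∈
          K.subgroupOf (alternatingGroup (Fin 5)) := Subgroup.mem_subgroupOf.mpr hchatK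
      rw [hbot, Subgroup.mem_bot] at hmem
      exact hchat1 (by simpa [Subtype.ext_iff] using hmem)
    · have hmem : (⟨e, Equiv.Perm.mem_alternatingGroup.mpr he⟩ : alternatingGroup (Fin 5)) ∈
          K.subgroupOf (alternatingGroup (Fin 5)) := by
        rw [htop]
        exact Subgroup.mem_top _
      exact Subgroup.mem_subgroupOf.mp hmem
  -- Step C : N' contains swap u v * swap v w for all u ≠ v, v ≠ w
  set P : Fin 5 → XH n := fun i => (f i : XH n) with hPdef
  have hPinj : Function.Injective P := fun i j h => f.injective (Subtype.ext h)
  have hPF : ∀ i, P i ∈ F := fun i => (f i).2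
  have hT : ∀ u v w : XH n, u ≠ v → v ≠ w →
      Equiv.swap u v * Equiv.swap v w ∈ N' := by
    intro u v w huv hvw
    by_cases huw : u = w
    · subst huw
      rw [Equiv.swap_comm v u, Equiv.swap_mul_self]
      exact one_mem _
    · obtain ⟨s1, hs1⟩ := Infinite.exists_notMem_finset
        ({P 0, P 1, P 2, u, v, w} : Finset (XH n))
      obtain ⟨s2, hs2⟩ := Infinite.exists_notMem_finset
        ({P 0, P 1, P 2, u, v, w, s1} : Finset (XH n))
      obtain ⟨s3, hs3⟩ := Infinite.exists_notMem_finset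
        ({P 0, P 1, P 2, u, v, w, s1, s2} : Finset (XH n))
      simp only [Finset.mem_insert, Finset.mem_singleton, not_or] at hs1 hs2 hs3
      obtain ⟨h1P0, h1P1, h1P2, h1u, h1v, h1w⟩ := hs1
      obtain ⟨h2P0, h2P1, h2P2, h2u, h2v, h2w, h2s1⟩ := hs2
      obtain ⟨h3P0, h3P1, h3P2, h3u, h3v, h3w, h3s1, h3s2⟩ := hs3
      have hP01 : P 0 ≠ P 1 := fun h => by simpa using hPinj h
      have hP02 : P 0 ≠ P 2 := fun h => by simpa using hPinj h
      have hP12 : P 1 ≠ P 2 := fun h => by simpa using hPinj h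
      set W : Equiv.Perm (XH n) :=
        (Equiv.swap s1 u * (Equiv.swap s2 v * Equiv.swap s3 w)) *
          (Equiv.swap (P 0) s1 * (Equiv.swap (P 1) s2 * Equiv.swap (P 2) s3)) with hWdef
      have hWH : W ∈ Houghton n := by
        refine mul_mem (mul_mem (swap_mem_houghton _ _)
          (mul_mem (swap_mem_houghton _ _) (swap_mem_houghton _ _)))
          (mul_mem (swap_mem_houghton _ _)
          (mul_mem (swap_mem_houghton _ _) (swap_mem_houghton _ _)))
      have hW0 : W (P 0) = u := by
        rw [hWdef]
        simp only [Equiv.Perm.mul_apply]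
        rw [Equiv.swap_apply_of_ne_of_ne hP02 (Ne.symm h3P0),
          Equiv.swap_apply_of_ne_of_ne hP01 (Ne.symm h2P0),
          Equiv.swap_apply_left,
          Equiv.swap_apply_of_ne_of_ne (Ne.symm h3s1) h1w,
          Equiv.swap_apply_of_ne_of_ne (Ne.symm h2s1) h1v,
          Equiv.swap_apply_left]
      have hW1 : W (P 1) = v := by
        rw [hWdef]
        simp only [Equiv.Perm.mul_apply]
        rw [Equiv.swap_apply_of_ne_of_ne hP12 (Ne.symm h3P1),
          Equiv.swap_apply_left,
          Equiv.swap_apply_of_ne_of_ne h2P0 h2s1,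
          Equiv.swap_apply_of_ne_of_ne (Ne.symm h3s2) h2w,
          Equiv.swap_apply_left,
          Equiv.swap_apply_of_ne_of_ne (Ne.symm h1v) (Ne.symm huv)]
      have hW2 : W (P 2) = w := by
        rw [hWdef]
        simp only [Equiv.Perm.mul_apply]
        rw [Equiv.swap_apply_left,
          Equiv.swap_apply_of_ne_of_ne h3P1 h3s2,
          Equiv.swap_apply_of_ne_of_ne h3P0 h3s1,
          Equiv.swap_apply_left,
          Equiv.swap_apply_of_ne_of_ne (Ne.symm h2w) (Ne.symm hvw),
          Equiv.swap_apply_of_ne_of_ne (Ne.symm h1w) (fun h => huw h.symm)]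
      have hm : ι (Equiv.swap 0 1 * Equiv.swap 1 2) ∈ N' := by
        refine hιN _ ?_
        rw [map_mul, Equiv.Perm.sign_swap (by decide), Equiv.Perm.sign_swap (by decide)]
        norm_num
      have hm' : Equiv.swap (P 0) (P 1) * Equiv.swap (P 1) (P 2) ∈ N' := by
        rwa [map_mul, hι_swap, hι_swap] at hm
      have hkey : Equiv.swap u v * Equiv.swap v w =
          W * (Equiv.swap (P 0) (P 1) * Equiv.swap (P 1) (P 2)) * W⁻¹ := by
        rw [← hW0, ← hW1, ← hW2, Equiv.swap_apply_apply, Equiv.swap_apply_apply]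
        group
      rw [hkey]
      exact hconj W hWH _ hm'
  -- Step C' : N' contains all products of two swaps
  have hDS : ∀ a b c d : XH n, a ≠ b → c ≠ d →
      Equiv.swap a b * Equiv.swap c d ∈ N' := by
    intro a b c d hab hcd
    by_cases h1 : c = a
    · subst h1
      by_cases h2 : d = b
      · subst h2
        rw [Equiv.swap_mul_self]
        exact one_mem _
      · rw [Equiv.swap_comm c b]
        exact hT b c d (Ne.symm hab) hcd
    · by_cases h2 : c = b
      · subst h2
        exact hT a c d hab hcd
      · by_cases h3 : d = a
        · subst h3
          rw [Equiv.swap_comm c d, Equiv.swap_comm d b]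
          exact hT b d c (Ne.symm hab) (Ne.symm h1)
        · by_cases h4 : d = b
          · subst h4
            rw [Equiv.swap_comm c d]
            exact hT a d c hab (Ne.symm h2)
          · have hbc : b ≠ c := Ne.symm h2
            have hsplit : Equiv.swap a b * Equiv.swap c d =
                (Equiv.swap a b * Equiv.swap b c) * (Equiv.swap b c * Equiv.swap c d) := by
              rw [mul_assoc, ← mul_assoc (Equiv.swap b c), Equiv.swap_mul_self, one_mul]
            rw [hsplit]
            exact mul_mem (hT a b c hab hbc) (hT b c d hbc hcd)
  -- Step D : every product of an even number of swaps lies in N'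
  have hEL : ∀ (k : ℕ) (l : List (Equiv.Perm (XH n))),
      (∀ τ ∈ l, τ.IsSwap) → l.length = 2 * k → l.prod ∈ N' := by
    intro k
    induction k with
    | zero =>
      intro l _ hlen
      have : l = [] := List.length_eq_zero_iff.mp (by omega)
      rw [this, List.prod_nil]
      exact one_mem _
    | succ k ih =>
      intro l hl hlen
      match l, hlen with
      | τ1 :: τ2 :: l', hlen =>
        have hlen' : l'.length = 2 * k := by
          simp only [List.length_cons] at hlen
          omega
        rw [List.prod_cons, List.prod_cons, ← mul_assoc]
        refine mul_mem ?_ (ih l' (fun τ hτ => hl τ (by simp [hτ])) hlen')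
        obtain ⟨p, q, hpq, h1⟩ := hl τ1 (by simp)
        obtain ⟨r, s, hrs, h2⟩ := hl τ2 (by simp)
        rw [h1, h2]
        exact hDS p q r s hpq hrs
  -- Step D' : the kernel contains every finitely supported even permutation
  have hFA : ∀ h : Houghton n, (h : Equiv.Perm (XH n)) ∈ FAltSub n → h ∈ φ.ker := by
    intro h hh
    obtain ⟨l, hsw, hev, hprod⟩ := hh
    obtain ⟨k, hk⟩ := hev
    have hmem : (h : Equiv.Perm (XH n)) ∈ N' := by
      rw [← hprod]
      exact hEL k l hsw (by omega)
    obtain ⟨h', hh', heq⟩ := Subgroup.mem_map.mp hmem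
    rwa [show h' = h from Subtype.ext heq] at hh'
  -- Step E : the contradiction via double commutators
  set r : Fin n := ray0 n hn0 with hrdef
  have hswap_pt : ∀ i j k : ℕ, Equiv.swap ((r, i) : XH n) (r, j) (r, k) =
      (r, if k = i then j else if k = j then i else k) := by
    intro i j k
    by_cases h1 : k = i
    · subst h1
      simp [Equiv.swap_apply_def, Prod.ext_iff]
    · by_cases h2 : k = j
      · subst h2
        simp [Equiv.swap_apply_def, Prod.ext_iff, h1]
      · simp [Equiv.swap_apply_def, Prod.ext_iff, h1, h2]
  obtain ⟨a, ha⟩ := hs (hSwap ((r, 0) : XH n) (r, 1))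
  obtain ⟨b, hb⟩ := hs (hSwap ((r, 1) : XH n) (r, 2))
  obtain ⟨c, hc⟩ := hs (hSwap ((r, 2) : XH n) (r, 3))
  obtain ⟨d, hd⟩ := hs (hSwap ((r, 3) : XH n) (r, 4))
  have hcoe_comm : ∀ p q : Houghton n,
      ((⁅p, q⁆ : Houghton n) : Equiv.Perm (XH n)) =
        (p : Equiv.Perm (XH n)) * q * (p : Equiv.Perm (XH n))⁻¹ * (q : Equiv.Perm (XH n))⁻¹ := by
    intro p q
    simp [commutatorElement_def]
  have hker_comm : ⁅⁅a, b⁆, ⁅c, d⁆⁆ ∈ φ.ker := by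
    refine hFA _ ?_
    rw [hcoe_comm]
    refine my_comm_falt ?_ ?_
    · rw [hcoe_comm]
      exact my_comm_fsym a.2 b.2
    · rw [hcoe_comm]
      exact my_comm_fsym c.2 d.2
  have hφ1 : φ ⁅⁅a, b⁆, ⁅c, d⁆⁆ = 1 := hker_comm
  rw [map_commutatorElement, map_commutatorElement, map_commutatorElement,
    ha, hb, hc, hd] at hφ1
  -- evaluate the explicit double commutator at (r, 2)
  have hval : ((⁅⁅hSwap ((r, 0) : XH n) (r, 1), hSwap ((r, 1) : XH n) (r, 2)⁆,
      ⁅hSwap ((r, 2) : XH n) (r, 3), hSwap ((r, 3) : XH n) (r, 4)⁆⁆ : Houghton n) :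
        Equiv.Perm (XH n)) ((r, 2) : XH n) = ((r, 2) : XH n) := by
    rw [hφ1]
    rfl
  simp only [commutatorElement_def, Subgroup.coe_mul, Subgroup.coe_inv, hSwap,
    Equiv.swap_inv, Equiv.Perm.mul_apply] at hval
  simp [Equiv.swap_apply_def, Prod.ext_iff] at hval
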